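/- arXiv:1511.05491 — 7 statements merged into one kernel-verified Lean document; each statement's English description precedes it below -/
import Mathlib

section
/- Let Δ be a symmetric positive definite real p×p matrix, let α be a real p×d matrix with orthonormal columns, and let α0 be a real p×(p−d) matrix whose columns form an orthonormal basis of the orthogonal complement of the column space of α. Then Δ⁻¹ = α(αᵀΔα)⁻¹αᵀ + Δ⁻¹α0(α0ᵀΔ⁻¹α0)⁻¹α0ᵀΔ⁻¹. -/
open Matrix

lemma aux_posDef {p k : ℕ} (Δ : Matrix (Fin p) (Fin p) ℝ) (hΔ : Δ.PosDef)
    (β : Matrix (Fin p) (Fin k) ℝ) (hβ : βᵀ * β = 1) : (βᵀ * Δ * β).PosDef := by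
  have hH : (βᵀ * Δ * β).IsHermitian := by
    have := Matrix.isHermitian_conjTranspose_mul_mul β hΔ.isHermitian
    simpa [Matrix.conjTranspose_eq_transpose_of_trivial] using this
  refine Matrix.PosDef.of_dotProduct_mulVec_pos hH (fun x hx => ?_)
  have hβx : β *ᵥ x ≠ 0 := by
    intro h
    apply hx
    have : βᵀ *ᵥ (β *ᵥ x) = x := by
      rw [Matrix.mulVec_mulVec, hβ, Matrix.one_mulVec]
    rw [h, Matrix.mulVec_zero] at this
    exact this.symm
  have := hΔ.dotProduct_mulVec_pos hβx
  have key : x ⬝ᵥ ((βᵀ * Δ * β) *ᵥ x) = (β *ᵥ x) ⬝ᵥ (Δ *ᵥ (β *ᵥ x)) := by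
    rw [Matrix.mul_assoc, ← Matrix.mulVec_mulVec, ← Matrix.mulVec_mulVec,
      Matrix.dotProduct_mulVec, Matrix.vecMul_transpose]
  simpa [star_trivial, key] using this

theorem delta_inverse_decomposition
    (p d : ℕ) (hd : 0 < d) (hdp : d < p)
    (Δ : Matrix (Fin p) (Fin p) ℝ) (hΔ : Δ.PosDef)
    (α : Matrix (Fin p) (Fin d) ℝ) (hα : αᵀ * α = 1)
    (α0 : Matrix (Fin p) (Fin (p - d)) ℝ) (hα0 : α0ᵀ * α0 = 1)
    (horth : αᵀ * α0 = 0) :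
    Δ⁻¹ = α * (αᵀ * Δ * α)⁻¹ * αᵀ
        + Δ⁻¹ * α0 * (α0ᵀ * Δ⁻¹ * α0)⁻¹ * α0ᵀ * Δ⁻¹ := by
  set A := αᵀ * Δ * α with hAdef
  set C := α0ᵀ * Δ⁻¹ * α0 with hCdef
  have hA : A.PosDef := aux_posDef Δ hΔ α hα
  have hC : C.PosDef := aux_posDef Δ⁻¹ hΔ.inv α0 hα0
  have hAdet : IsUnit A.det := (Matrix.isUnit_iff_isUnit_det A).1 hA.isUnit
  have hCdet : IsUnit C.det := (Matrix.isUnit_iff_isUnit_det C).1 hC.isUnit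
  have hΔdet : IsUnit Δ.det := (Matrix.isUnit_iff_isUnit_det Δ).1 hΔ.isUnit
  have hAinv : A⁻¹ * A = 1 := Matrix.nonsing_inv_mul A hAdet
  have hAinv' : A * A⁻¹ = 1 := Matrix.mul_nonsing_inv A hAdet
  have hCinv : C⁻¹ * C = 1 := Matrix.nonsing_inv_mul C hCdet
  have hCinv' : C * C⁻¹ = 1 := Matrix.mul_nonsing_inv C hCdet
  have hΔΔ : Δ⁻¹ * Δ = 1 := Matrix.nonsing_inv_mul Δ hΔdet
  have hΔΔ' : Δ * Δ⁻¹ = 1 := Matrix.mul_nonsing_inv Δ hΔdet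
  have hΔs : Δᵀ = Δ := by
    rw [← Matrix.conjTranspose_eq_transpose_of_trivial]; exact hΔ.isHermitian
  have hΔis : (Δ⁻¹)ᵀ = Δ⁻¹ := by
    rw [← Matrix.conjTranspose_eq_transpose_of_trivial]; exact hΔ.inv.isHermitian
  have hAs : Aᵀ = A := by
    rw [← Matrix.conjTranspose_eq_transpose_of_trivial]; exact hA.isHermitian
  have hCs : Cᵀ = C := by
    rw [← Matrix.conjTranspose_eq_transpose_of_trivial]; exact hC.isHermitian
  have horth' : α0ᵀ * α = 0 := by
    have := congrArg Matrix.transpose horth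
    simpa [Matrix.transpose_mul] using this
  -- completeness
  have hcomp : α * αᵀ + α0 * α0ᵀ = 1 := by
    have e : Fin p ≃ Fin d ⊕ Fin (p - d) :=
      (finCongr (by omega)).trans finSumFinEquiv.symm
    have h1 : fromRows αᵀ α0ᵀ * fromCols α α0 = 1 := by
      rw [fromRows_mul_fromCols, hα, hα0, horth, horth', ← Matrix.fromBlocks_one]
    have h2 : fromCols α α0 * fromRows αᵀ α0ᵀ = 1 :=
      (Matrix.fromCols_mul_fromRows_eq_one_comm e α α0 αᵀ α0ᵀ).2 h1
    rwa [fromCols_mul_fromRows] at h2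
  set M := α * A⁻¹ * αᵀ + Δ⁻¹ * α0 * C⁻¹ * α0ᵀ * Δ⁻¹ with hMdef
  set Y := Δ⁻¹ - M with hYdef
  have hMΔα : M * (Δ * α) = α := by
    have e1 : αᵀ * (Δ * α) = A := by rw [hAdef, Matrix.mul_assoc]
    have e2 : Δ⁻¹ * (Δ * α) = α := by rw [← Matrix.mul_assoc, hΔΔ, Matrix.one_mul]
    rw [hMdef, Matrix.add_mul]
    rw [Matrix.mul_assoc (α * A⁻¹), e1, Matrix.mul_assoc, hAinv, Matrix.mul_one]
    rw [Matrix.mul_assoc (Δ⁻¹ * α0 * C⁻¹ * α0ᵀ), e2,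
      Matrix.mul_assoc (Δ⁻¹ * α0 * C⁻¹), horth', Matrix.mul_zero, add_zero]
  have hYΔα : Y * (Δ * α) = 0 := by
    rw [hYdef, Matrix.sub_mul, hMΔα, ← Matrix.mul_assoc, hΔΔ, Matrix.one_mul, sub_self]
  have hYα0 : Y * α0 = 0 := by
    have e3 : α0ᵀ * Δ⁻¹ * α0 = C := hCdef.symm
    rw [hYdef, Matrix.sub_mul, hMdef, Matrix.add_mul]
    rw [Matrix.mul_assoc (α * A⁻¹), horth, Matrix.mul_zero, zero_add]
    rw [Matrix.mul_assoc (Δ⁻¹ * α0 * C⁻¹ * α0ᵀ), Matrix.mul_assoc (Δ⁻¹ * α0 * C⁻¹),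
      ← Matrix.mul_assoc α0ᵀ, e3, Matrix.mul_assoc (Δ⁻¹ * α0), hCinv, Matrix.mul_one,
      sub_self]
  have hYs : Yᵀ = Y := by
    have hCs' : Cᵀ⁻¹ = C⁻¹ := by rw [hCs]
    have hAs' : Aᵀ⁻¹ = A⁻¹ := by rw [hAs]
    rw [hYdef, Matrix.transpose_sub, hΔis, hMdef, Matrix.transpose_add]
    simp [Matrix.transpose_mul, Matrix.transpose_nonsing_inv, hAs', hCs', hΔis,
      Matrix.mul_assoc]
  have hα0Y : α0ᵀ * Y = 0 := by
    have := congrArg Matrix.transpose hYα0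
    simpa [Matrix.transpose_mul, hYs] using this
  have h1 : Y = α * (αᵀ * Y) := by
    calc Y = (α * αᵀ + α0 * α0ᵀ) * Y := by rw [hcomp, Matrix.one_mul]
    _ = α * (αᵀ * Y) + α0 * (α0ᵀ * Y) := by
        rw [Matrix.add_mul, Matrix.mul_assoc, Matrix.mul_assoc]
    _ = α * (αᵀ * Y) := by rw [hα0Y, Matrix.mul_zero, add_zero]
  have h2 : Y = (Y * α) * αᵀ := by
    calc Y = Y * (α * αᵀ + α0 * α0ᵀ) := by rw [hcomp, Matrix.mul_one]
    _ = (Y * α) * αᵀ + (Y * α0) * α0ᵀ := by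
        rw [Matrix.mul_add, Matrix.mul_assoc, Matrix.mul_assoc]
    _ = (Y * α) * αᵀ := by rw [hYα0, Matrix.zero_mul, add_zero]
  set Z := αᵀ * Y * α with hZdef
  have hYZ : Y = α * Z * αᵀ := by
    conv_lhs => rw [h2]
    conv_lhs => rw [h1]
    rw [hZdef, Matrix.mul_assoc α, Matrix.mul_assoc α, Matrix.mul_assoc αᵀ]
  have h5 : α * (Z * A) = 0 := by
    have h6 : (α * Z * αᵀ) * (Δ * α) = 0 := by rw [← hYZ]; exact hYΔα
    calc α * (Z * A) = (α * Z * αᵀ) * (Δ * α) := by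
          rw [hAdef]; simp only [Matrix.mul_assoc]
    _ = 0 := h6
  have hZA : Z * A = 0 := by
    calc Z * A = (αᵀ * α) * (Z * A) := by rw [hα, Matrix.one_mul]
    _ = αᵀ * (α * (Z * A)) := by rw [Matrix.mul_assoc]
    _ = 0 := by rw [h5, Matrix.mul_zero]
  have hZ : Z = 0 := by
    calc Z = Z * A * A⁻¹ := by rw [Matrix.mul_assoc, hAinv', Matrix.mul_one]
    _ = 0 := by rw [hZA, Matrix.zero_mul]
  have hY0 : Y = 0 := by rw [hYZ, hZ, Matrix.mul_zero, Matrix.zero_mul]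
  have := sub_eq_zero.mp (hYdef ▸ hY0)
  exact this
end

section
/- Let Δ be a symmetric positive definite real p×p matrix, let α be a real p×d matrix with orthonormal columns, and let α0 be a real p×(p−d) matrix whose columns form an orthonormal basis of the orthogonal complement of the column space of α. Then det Δ = det(αᵀΔα) / det(α0ᵀΔ⁻¹α0). -/
open Matrix

theorem delta_det_decomposition
    (p d : ℕ) (hd : 0 < d) (hdp : d < p)
    (Δ : Matrix (Fin p) (Fin p) ℝ) (hΔ : Δ.PosDef)
    (α : Matrix (Fin p) (Fin d) ℝ) (hα : αᵀ * α = 1)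
    (α0 : Matrix (Fin p) (Fin (p - d)) ℝ) (hα0 : α0ᵀ * α0 = 1)
    (horth : αᵀ * α0 = 0) :
    Δ.det = (αᵀ * Δ * α).det / (α0ᵀ * Δ⁻¹ * α0).det := by
  have e : (Fin d ⊕ Fin (p - d)) ≃ Fin p :=
    finSumFinEquiv.trans (finCongr (Nat.add_sub_cancel' hdp.le))
  have horth' : α0ᵀ * α = 0 := by
    have := congrArg transpose horth
    simpa [transpose_mul] using this
  have hΔinv : Δ * Δ⁻¹ = 1 := mul_nonsing_inv Δ (isUnit_iff_ne_zero.2 hΔ.det_pos.ne')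
  -- square versions
  set Q : Matrix (Fin p) (Fin p) ℝ := (fromCols α α0).submatrix id ⇑e.symm with hQ
  set C : Matrix (Fin p) (Fin p) ℝ := (fromCols α (Δ⁻¹ * α0)).submatrix id ⇑e.symm with hC
  have hQt : Qᵀ = (fromRows αᵀ α0ᵀ).submatrix ⇑e.symm id := by
    rw [hQ, transpose_submatrix, transpose_fromCols]
  -- product identities
  have hmul : ∀ (N : Matrix (Fin p) (Fin d ⊕ Fin (p - d)) ℝ),
      Qᵀ * (N.submatrix id ⇑e.symm) =
        ((fromRows αᵀ α0ᵀ) * N).submatrix ⇑e.symm ⇑e.symm := by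
    intro N
    rw [hQt]
    have := submatrix_mul_equiv (fromRows αᵀ α0ᵀ) N ⇑e.symm (Equiv.refl (Fin p)) ⇑e.symm
    simpa using this
  have hDC : Δ * C = (fromCols (Δ * α) α0).submatrix id ⇑e.symm := by
    rw [hC]
    have h := submatrix_mul_equiv Δ (fromCols α (Δ⁻¹ * α0)) (id : Fin p → Fin p)
      (Equiv.refl (Fin p)) ⇑e.symm
    simp only [Equiv.coe_refl, submatrix_id_id] at h
    rw [h, Matrix.mul_fromCols, ← Matrix.mul_assoc, hΔinv, Matrix.one_mul]
  have key1 : Qᵀ * (Δ * C) =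
      (fromBlocks (αᵀ * Δ * α) 0 (α0ᵀ * Δ * α) 1).submatrix ⇑e.symm ⇑e.symm := by
    rw [hDC, hmul, fromRows_mul_fromCols]
    simp only [← Matrix.mul_assoc, horth, hα0]
  have key2 : Qᵀ * C =
      (fromBlocks 1 (αᵀ * Δ⁻¹ * α0) 0 (α0ᵀ * Δ⁻¹ * α0)).submatrix ⇑e.symm ⇑e.symm := by
    rw [hC, hmul, fromRows_mul_fromCols]
    simp only [← Matrix.mul_assoc, hα, horth']
  -- determinant consequences
  have d1 : Qᵀ.det * (Δ.det * C.det) = (αᵀ * Δ * α).det := by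
    have := congrArg det key1
    rw [det_mul, det_mul, det_submatrix_equiv_self e.symm, det_fromBlocks_zero₁₂] at this
    simpa using this
  have d2 : Qᵀ.det * C.det = (α0ᵀ * Δ⁻¹ * α0).det := by
    have := congrArg det key2
    rw [det_mul, det_submatrix_equiv_self e.symm, det_fromBlocks_zero₂₁] at this
    simpa using this
  -- positive definiteness of αᵀΔα
  have hA : (αᵀ * Δ * α).PosDef := by
    constructor
    · have h1 := hΔ.1
      unfold IsHermitian at *
      rw [conjTranspose_mul, conjTranspose_mul, h1]
      simp [Matrix.mul_assoc]
    · intro x hx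
      have hinj : Function.Injective α.mulVec := by
        intro u v h
        have := congrArg (fun w => αᵀ *ᵥ w) h
        simpa [mulVec_mulVec, hα] using this
      have := (hΔ.conjTranspose_mul_mul_same hinj).2 hx
      simpa [conjTranspose_eq_transpose_of_trivial] using this
  have hAne : (αᵀ * Δ * α).det ≠ 0 := ne_of_gt hA.det_pos
  have key : Δ.det * (α0ᵀ * Δ⁻¹ * α0).det = (αᵀ * Δ * α).det := by
    rw [← d2, ← d1]; ring
  have hDne : (α0ᵀ * Δ⁻¹ * α0).det ≠ 0 := by
    intro h; rw [h, mul_zero] at key; exact hAne key.symm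
  rw [eq_div_iff hDne]
  exact key
end

section
/- Let Δ be a symmetric positive definite real p×p matrix, let α be a real p×d matrix with orthonormal columns, and let α0 be a real p×(p−d) matrix whose columns form an orthonormal basis of the orthogonal complement of the column space of α. Then (αᵀΔα)⁻¹ αᵀΔα0 = − αᵀΔ⁻¹α0 (α0ᵀΔ⁻¹α0)⁻¹. -/
open Matrix

lemma sandwich_posdef {p k : ℕ} (Δ : Matrix (Fin p) (Fin p) ℝ) (hΔ : Δ.PosDef)
    (B : Matrix (Fin p) (Fin k) ℝ) (hB : Bᵀ * B = 1) : (Bᵀ * Δ * B).PosDef := by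
  rw [posDef_iff_dotProduct_mulVec]
  constructor
  · have hΔs : Δᵀ = Δ := hΔ.isHermitian.eq
    show (Bᵀ * Δ * B)ᴴ = _
    rw [conjTranspose_eq_transpose_of_trivial]
    simp [Matrix.transpose_mul, Matrix.mul_assoc, hΔs]
  · intro x hx
    have hBx : B *ᵥ x ≠ 0 := by
      intro h
      apply hx
      have : Bᵀ *ᵥ (B *ᵥ x) = x := by
        rw [Matrix.mulVec_mulVec, hB, Matrix.one_mulVec]
      rw [h, Matrix.mulVec_zero] at this
      exact this.symm
    have hpos := hΔ.dotProduct_mulVec_pos hBx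
    have key : star x ⬝ᵥ (Bᵀ * Δ * B) *ᵥ x = star (B *ᵥ x) ⬝ᵥ Δ *ᵥ (B *ᵥ x) := by
      simp only [star_trivial]
      rw [Matrix.mul_assoc, ← Matrix.mulVec_mulVec, Matrix.dotProduct_mulVec,
        Matrix.vecMul_transpose]
      rw [← Matrix.mulVec_mulVec]
    rw [key]
    simpa using hpos

theorem delta_cross_block_identity
    (p d : ℕ) (hd : 0 < d) (hdp : d < p)
    (Δ : Matrix (Fin p) (Fin p) ℝ) (hΔ : Δ.PosDef)
    (α : Matrix (Fin p) (Fin d) ℝ) (hα : αᵀ * α = 1)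
    (α0 : Matrix (Fin p) (Fin (p - d)) ℝ) (hα0 : α0ᵀ * α0 = 1)
    (horth : αᵀ * α0 = 0) :
    (αᵀ * Δ * α)⁻¹ * (αᵀ * Δ * α0)
      = -(αᵀ * Δ⁻¹ * α0 * (α0ᵀ * Δ⁻¹ * α0)⁻¹) := by
  have e : Fin p ≃ Fin d ⊕ Fin (p - d) :=
    (finCongr (Nat.add_sub_cancel' hdp.le).symm).trans finSumFinEquiv.symm
  have hone : fromRows αᵀ α0ᵀ * fromCols α α0 = 1 := by
    rw [fromRows_mul_fromCols, horth]
    have horth' : α0ᵀ * α = 0 := by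
      have := congrArg Matrix.transpose horth
      simpa [Matrix.transpose_mul] using this
    rw [hα, hα0, horth', ← Matrix.fromBlocks_one]
  have hcomp : α * αᵀ + α0 * α0ᵀ = 1 := by
    rw [← fromCols_mul_fromRows]
    exact (fromCols_mul_fromRows_eq_one_comm e α α0 αᵀ α0ᵀ).mpr hone
  have hΔinv : Δ⁻¹.PosDef := hΔ.inv
  have hdet : IsUnit Δ.det := isUnit_iff_ne_zero.mpr hΔ.det_pos.ne'
  have hA := sandwich_posdef Δ hΔ α hα
  have hZ := sandwich_posdef Δ⁻¹ hΔinv α0 hα0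
  have hAdet : IsUnit (αᵀ * Δ * α).det := isUnit_iff_ne_zero.mpr hA.det_pos.ne'
  have hZdet : IsUnit (α0ᵀ * Δ⁻¹ * α0).det := isUnit_iff_ne_zero.mpr hZ.det_pos.ne'
  have key : (αᵀ * Δ * α) * (αᵀ * Δ⁻¹ * α0) + (αᵀ * Δ * α0) * (α0ᵀ * Δ⁻¹ * α0) = 0 := by
    have step : (αᵀ * Δ * α) * (αᵀ * Δ⁻¹ * α0) + (αᵀ * Δ * α0) * (α0ᵀ * Δ⁻¹ * α0)
        = αᵀ * (Δ * ((α * αᵀ + α0 * α0ᵀ) * (Δ⁻¹ * α0))) := by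
      simp only [Matrix.mul_add, Matrix.add_mul, Matrix.mul_assoc]
    rw [step, hcomp, Matrix.one_mul, ← Matrix.mul_assoc Δ,
      Matrix.mul_nonsing_inv _ hdet, Matrix.one_mul, horth]
  have hBZ : (αᵀ * Δ * α0) * (α0ᵀ * Δ⁻¹ * α0) = -((αᵀ * Δ * α) * (αᵀ * Δ⁻¹ * α0)) :=
    eq_neg_of_add_eq_zero_left (by rw [add_comm]; exact key)
  calc (αᵀ * Δ * α)⁻¹ * (αᵀ * Δ * α0)
      = (αᵀ * Δ * α)⁻¹ * ((αᵀ * Δ * α0) * ((α0ᵀ * Δ⁻¹ * α0) * (α0ᵀ * Δ⁻¹ * α0)⁻¹)) := by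
        rw [Matrix.mul_nonsing_inv _ hZdet, Matrix.mul_one]
    _ = (αᵀ * Δ * α)⁻¹ * (-((αᵀ * Δ * α) * (αᵀ * Δ⁻¹ * α0)) * (α0ᵀ * Δ⁻¹ * α0)⁻¹) := by
        rw [← Matrix.mul_assoc (αᵀ * Δ * α0), hBZ]
    _ = -((αᵀ * Δ * α)⁻¹ * (αᵀ * Δ * α) * (αᵀ * Δ⁻¹ * α0) * (α0ᵀ * Δ⁻¹ * α0)⁻¹) := by
        simp only [Matrix.neg_mul, Matrix.mul_neg, Matrix.mul_assoc]
    _ = -(αᵀ * Δ⁻¹ * α0 * (α0ᵀ * Δ⁻¹ * α0)⁻¹) := by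
        rw [Matrix.nonsing_inv_mul _ hAdet, Matrix.one_mul]
end

section
/- Let Δ be a symmetric positive definite real p×p matrix, let α be a real p×d matrix with orthonormal columns, and let α0 be a real p×(p−d) matrix whose columns form an orthonormal basis of the orthogonal complement of the column space of α. Then Δ⁻¹α0 = (α0 − α(αᵀΔα)⁻¹αᵀΔα0) · (α0ᵀΔ⁻¹α0). -/
open Matrix

theorem delta_inv_alpha0_identity
    (p d : ℕ) (hd : 0 < d) (hdp : d < p)
    (Δ : Matrix (Fin p) (Fin p) ℝ) (hΔ : Δ.PosDef)
    (α : Matrix (Fin p) (Fin d) ℝ) (hα : αᵀ * α = 1)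
    (α0 : Matrix (Fin p) (Fin (p - d)) ℝ) (hα0 : α0ᵀ * α0 = 1)
    (horth : αᵀ * α0 = 0) :
    Δ⁻¹ * α0 = (α0 - α * (αᵀ * Δ * α)⁻¹ * (αᵀ * Δ * α0)) * (α0ᵀ * Δ⁻¹ * α0) := by
  have hdet : IsUnit Δ.det := isUnit_iff_ne_zero.mpr hΔ.det_pos.ne'
  have hΔi : Δ * Δ⁻¹ = 1 := mul_nonsing_inv Δ hdet
  have hαconj : αᴴ = αᵀ := by ext i j; simp [conjTranspose_apply]
  have horth' : α0ᵀ * α = 0 := by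
    have := congrArg Matrix.transpose horth
    simpa [Matrix.transpose_mul] using this
  -- S := αᵀ Δ α is positive definite
  have hS : (αᵀ * Δ * α).PosDef := by
    refine posDef_iff_dotProduct_mulVec.mpr ?_
    constructor
    · rw [← hαconj]; exact isHermitian_conjTranspose_mul_mul α hΔ.isHermitian
    · intro x hx
      have hax : α *ᵥ x ≠ 0 := by
        intro h
        apply hx
        have : (αᵀ * α) *ᵥ x = αᵀ *ᵥ (α *ᵥ x) := (mulVec_mulVec _ _ _).symm
        rw [hα, one_mulVec, h, mulVec_zero] at this
        exact this
      have := hΔ.dotProduct_mulVec_pos hax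
      rw [← hαconj]
      simpa only [star_mulVec, dotProduct_mulVec, vecMul_vecMul] using this
  have hSdet : IsUnit (αᵀ * Δ * α).det := isUnit_iff_ne_zero.mpr hS.det_pos.ne'
  have hSinv : (αᵀ * Δ * α)⁻¹ * (αᵀ * Δ * α) = 1 := nonsing_inv_mul _ hSdet
  -- completeness: α αᵀ + α0 α0ᵀ = 1
  have key : α * αᵀ + α0 * α0ᵀ = 1 := by
    have h1 : fromRows αᵀ α0ᵀ * fromCols α α0 = 1 := by
      rw [fromRows_mul_fromCols, hα, hα0, horth, horth', ← fromBlocks_one]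
    have e : Fin p ≃ Fin d ⊕ Fin (p - d) :=
      (finSumFinEquiv.trans (finCongr (by omega))).symm
    have h2 : fromCols α α0 * fromRows αᵀ α0ᵀ = 1 :=
      (fromCols_mul_fromRows_eq_one_comm e α α0 αᵀ α0ᵀ).mpr h1
    rwa [fromCols_mul_fromRows] at h2
  -- αᵀ Δ⁻¹ α0 in terms of the rest
  have h0 : αᵀ * Δ * α * (αᵀ * (Δ⁻¹ * α0)) + αᵀ * Δ * α0 * (α0ᵀ * (Δ⁻¹ * α0)) = 0 := by
    have : αᵀ * Δ * (α * αᵀ + α0 * α0ᵀ) * (Δ⁻¹ * α0) = αᵀ * Δ * α * (αᵀ * (Δ⁻¹ * α0)) + αᵀ * Δ * α0 * (α0ᵀ * (Δ⁻¹ * α0)) := by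
      rw [Matrix.mul_add, Matrix.add_mul]
      simp only [Matrix.mul_assoc]
    rw [key, Matrix.mul_one] at this
    rw [← this]
    calc αᵀ * Δ * (Δ⁻¹ * α0) = αᵀ * (Δ * Δ⁻¹) * α0 := by simp only [Matrix.mul_assoc]
      _ = 0 := by rw [hΔi, Matrix.mul_one, horth]
  have hX : αᵀ * (Δ⁻¹ * α0) = -((αᵀ * Δ * α)⁻¹ * (αᵀ * Δ * α0) * (α0ᵀ * (Δ⁻¹ * α0))) := by
    have h3 : αᵀ * Δ * α * (αᵀ * (Δ⁻¹ * α0)) = -(αᵀ * Δ * α0 * (α0ᵀ * (Δ⁻¹ * α0))) := by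
      exact eq_neg_of_add_eq_zero_left h0
    calc αᵀ * (Δ⁻¹ * α0) = ((αᵀ * Δ * α)⁻¹ * (αᵀ * Δ * α)) * (αᵀ * (Δ⁻¹ * α0)) := by
          rw [hSinv, Matrix.one_mul]
      _ = (αᵀ * Δ * α)⁻¹ * (αᵀ * Δ * α * (αᵀ * (Δ⁻¹ * α0))) := by
          simp only [Matrix.mul_assoc]
      _ = (αᵀ * Δ * α)⁻¹ * (-(αᵀ * Δ * α0 * (α0ᵀ * (Δ⁻¹ * α0)))) := by rw [h3]
      _ = -((αᵀ * Δ * α)⁻¹ * (αᵀ * Δ * α0) * (α0ᵀ * (Δ⁻¹ * α0))) := by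
          simp only [Matrix.mul_neg, Matrix.mul_assoc]
  -- finish
  calc Δ⁻¹ * α0 = (α * αᵀ + α0 * α0ᵀ) * (Δ⁻¹ * α0) := by rw [key, Matrix.one_mul]
    _ = α * (αᵀ * (Δ⁻¹ * α0)) + α0 * (α0ᵀ * (Δ⁻¹ * α0)) := by
        rw [Matrix.add_mul]; simp only [Matrix.mul_assoc]
    _ = α * (-((αᵀ * Δ * α)⁻¹ * (αᵀ * Δ * α0) * (α0ᵀ * (Δ⁻¹ * α0)))) + α0 * (α0ᵀ * (Δ⁻¹ * α0)) := by
        rw [hX]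
    _ = (α0 - α * (αᵀ * Δ * α)⁻¹ * (αᵀ * Δ * α0)) * (α0ᵀ * Δ⁻¹ * α0) := by
        rw [Matrix.sub_mul]
        simp only [Matrix.mul_neg, Matrix.mul_assoc, sub_eq_add_neg]
        abel
end

section
/- Let Δ be a symmetric positive definite real p×p matrix, let α be a real p×d matrix with orthonormal columns, and let α0 be a real p×(p−d) matrix whose columns form an orthonormal basis of the orthogonal complement of the column space of α. Define H1 = αᵀΔα, H2 = (α0ᵀΔ⁻¹α0)⁻¹, and H3 = (αᵀΔα)⁻¹αᵀΔα0. Then Δ⁻¹ = α H1⁻¹ αᵀ + (α0 − α H3) H2⁻¹ (α0ᵀ − H3ᵀαᵀ). -/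
open Matrix

lemma aux_posDef_conj {p m : ℕ} (Δ : Matrix (Fin p) (Fin p) ℝ) (hΔ : Δ.PosDef)
    (B : Matrix (Fin p) (Fin m) ℝ) (hB : ∀ x, B *ᵥ x = 0 → x = 0) :
    (Bᵀ * Δ * B).PosDef := by
  have hsym : Δᵀ = Δ := hΔ.isHermitian.eq
  rw [posDef_iff_dotProduct_mulVec]
  constructor
  · show (Bᵀ * Δ * B)ᴴ = _
    rw [conjTranspose_eq_transpose_of_trivial, transpose_mul, transpose_mul,
      transpose_transpose, hsym, Matrix.mul_assoc]
  · intro x hx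
    have hne : B *ᵥ x ≠ 0 := fun h => hx (hB x h)
    have := (posDef_iff_dotProduct_mulVec.1 hΔ).2 hne
    have hstar : (star x : Fin m → ℝ) = x := by ext i; simp
    rw [hstar]
    have hstar2 : (star (B *ᵥ x) : Fin p → ℝ) = B *ᵥ x := by ext i; simp
    rw [hstar2] at this
    have heq : x ⬝ᵥ ((Bᵀ * Δ * B) *ᵥ x) = (B *ᵥ x) ⬝ᵥ (Δ *ᵥ (B *ᵥ x)) := by
      rw [← mulVec_mulVec, ← mulVec_mulVec, dotProduct_mulVec, vecMul_transpose]
    rw [heq]; exact this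

theorem delta_inverse_H_decomposition
    (p d : ℕ) (hd : 0 < d) (hdp : d < p)
    (Δ : Matrix (Fin p) (Fin p) ℝ) (hΔ : Δ.PosDef)
    (α : Matrix (Fin p) (Fin d) ℝ) (hα : αᵀ * α = 1)
    (α0 : Matrix (Fin p) (Fin (p - d)) ℝ) (hα0 : α0ᵀ * α0 = 1)
    (horth : αᵀ * α0 = 0)
    (H1 : Matrix (Fin d) (Fin d) ℝ) (hH1 : H1 = αᵀ * Δ * α)
    (H2 : Matrix (Fin (p - d)) (Fin (p - d)) ℝ) (hH2 : H2 = (α0ᵀ * Δ⁻¹ * α0)⁻¹)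
    (H3 : Matrix (Fin d) (Fin (p - d)) ℝ) (hH3 : H3 = (αᵀ * Δ * α)⁻¹ * (αᵀ * Δ * α0)) :
    Δ⁻¹ = α * H1⁻¹ * αᵀ + (α0 - α * H3) * H2⁻¹ * (α0ᵀ - H3ᵀ * αᵀ) := by
  have hsym : Δᵀ = Δ := hΔ.isHermitian.eq
  have horth' : α0ᵀ * α = 0 := by
    have := congrArg Matrix.transpose horth
    simpa [transpose_mul] using this
  -- completeness
  have hcompl : α * αᵀ + α0 * α0ᵀ = 1 := by
    have e : Fin p ≃ Fin d ⊕ Fin (p - d) :=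
      (finCongr (by omega : p = d + (p - d))).trans finSumFinEquiv.symm
    have h1 : fromRows αᵀ α0ᵀ * fromCols α α0 = 1 := by
      rw [fromRows_mul_fromCols, hα, hα0, horth, horth', ← fromBlocks_one]
    have h2 := (fromCols_mul_fromRows_eq_one_comm e α α0 αᵀ α0ᵀ).2 h1
    rwa [fromCols_mul_fromRows] at h2
  set A := αᵀ * Δ * α with hA_def
  set B := αᵀ * Δ * α0 with hB_def
  set C := α0ᵀ * Δ * α0 with hC_def
  have hBt : α0ᵀ * Δ * α = Bᵀ := by
    rw [hB_def, transpose_mul, transpose_mul, transpose_transpose, hsym, Matrix.mul_assoc]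
  -- A pos def
  have hαinj : ∀ x, α *ᵥ x = 0 → x = 0 := by
    intro x hx
    have : αᵀ *ᵥ (α *ᵥ x) = x := by rw [mulVec_mulVec, hα, one_mulVec]
    rw [hx, mulVec_zero] at this; exact this.symm
  have hA : A.PosDef := aux_posDef_conj Δ hΔ α hαinj
  have hAdet : IsUnit A.det := isUnit_iff_isUnit_det _ |>.1 hA.isUnit
  have hAA : A * A⁻¹ = 1 := mul_nonsing_inv _ hAdet
  have hAA' : A⁻¹ * A = 1 := nonsing_inv_mul _ hAdet
  have hAsym : Aᵀ = A := by
    rw [hA_def, transpose_mul, transpose_mul, transpose_transpose, hsym, Matrix.mul_assoc]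
  have hAinvT : (A⁻¹)ᵀ = A⁻¹ := by rw [transpose_nonsing_inv, hAsym]
  set W := α0 - α * (A⁻¹ * B) with hW_def
  set S := C - Bᵀ * A⁻¹ * B with hS_def
  -- key products
  have hΔα : Δ * α = α * A + α0 * Bᵀ := by
    calc Δ * α = (α * αᵀ + α0 * α0ᵀ) * (Δ * α) := by rw [hcompl, Matrix.one_mul]
      _ = α * (αᵀ * Δ * α) + α0 * (α0ᵀ * Δ * α) := by
          simp only [Matrix.add_mul, Matrix.mul_assoc]
      _ = α * A + α0 * Bᵀ := by rw [hBt, hA_def, Matrix.mul_assoc]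
  have hΔα0 : Δ * α0 = α * B + α0 * C := by
    calc Δ * α0 = (α * αᵀ + α0 * α0ᵀ) * (Δ * α0) := by rw [hcompl, Matrix.one_mul]
      _ = α * (αᵀ * Δ * α0) + α0 * (α0ᵀ * Δ * α0) := by
          simp only [Matrix.add_mul, Matrix.mul_assoc]
      _ = α * B + α0 * C := by rw [hB_def, hC_def, Matrix.mul_assoc, Matrix.mul_assoc]
  have hΔW : Δ * W = α0 * S := by
    have e1 : Δ * W = (α * B + α0 * C) - (α * A + α0 * Bᵀ) * (A⁻¹ * B) := by
      rw [hW_def, Matrix.mul_sub, hΔα0, ← Matrix.mul_assoc Δ α (A⁻¹ * B), hΔα]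
    have e2 : (α * A + α0 * Bᵀ) * (A⁻¹ * B) = α * B + α0 * (Bᵀ * A⁻¹ * B) := by
      rw [Matrix.add_mul]
      congr 1
      · rw [Matrix.mul_assoc, ← Matrix.mul_assoc A, hAA, Matrix.one_mul]
      · simp only [Matrix.mul_assoc]
    rw [e1, e2, hS_def, Matrix.mul_sub]
    abel
  have hα0tW : α0ᵀ * W = 1 := by
    rw [hW_def, Matrix.mul_sub, hα0, ← Matrix.mul_assoc, horth', Matrix.zero_mul, sub_zero]
  have hWtα0 : Wᵀ * α0 = 1 := by
    have := congrArg Matrix.transpose hα0tW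
    simpa [transpose_mul] using this
  -- S pos def
  have hWinj : ∀ x, W *ᵥ x = 0 → x = 0 := by
    intro x hx
    have : α0ᵀ *ᵥ (W *ᵥ x) = x := by rw [mulVec_mulVec, hα0tW, one_mulVec]
    rw [hx, mulVec_zero] at this; exact this.symm
  have hWΔW : Wᵀ * Δ * W = S := by
    rw [Matrix.mul_assoc, hΔW, ← Matrix.mul_assoc, hWtα0, Matrix.one_mul]
  have hS : S.PosDef := hWΔW ▸ aux_posDef_conj Δ hΔ W hWinj
  have hSdet : IsUnit S.det := isUnit_iff_isUnit_det _ |>.1 hS.isUnit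
  have hSS : S * S⁻¹ = 1 := mul_nonsing_inv _ hSdet
  -- H2 = S
  have hΔdet : IsUnit Δ.det := isUnit_iff_isUnit_det _ |>.1 hΔ.isUnit
  have hH2S : H2 = S := by
    have hleft : (α0ᵀ * Δ⁻¹ * α0) * S = 1 := by
      calc (α0ᵀ * Δ⁻¹ * α0) * S = α0ᵀ * Δ⁻¹ * (α0 * S) := by rw [Matrix.mul_assoc]
        _ = α0ᵀ * Δ⁻¹ * (Δ * W) := by rw [hΔW]
        _ = α0ᵀ * ((Δ⁻¹ * Δ) * W) := by
            simp only [Matrix.mul_assoc]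
        _ = α0ᵀ * W := by rw [nonsing_inv_mul _ hΔdet, Matrix.one_mul]
        _ = 1 := hα0tW
    have : S⁻¹ = α0ᵀ * Δ⁻¹ * α0 := inv_eq_left_inv hleft
    rw [hH2, ← this, nonsing_inv_nonsing_inv _ hSdet]
  have hH3AB : H3 = A⁻¹ * B := by rw [hH3]
  -- final
  have hRHS : Δ * (α * H1⁻¹ * αᵀ + (α0 - α * H3) * H2⁻¹ * (α0ᵀ - H3ᵀ * αᵀ)) = 1 := by
    have hWeq : α0 - α * H3 = W := by rw [hH3AB, hW_def]
    have hWteq : α0ᵀ - H3ᵀ * αᵀ = Wᵀ := by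
      rw [hW_def, transpose_sub, transpose_mul, hH3AB]
    rw [hWeq, hWteq, hH1, hH2S, Matrix.mul_add]
    have h1 : Δ * (α * A⁻¹ * αᵀ) = α * αᵀ + α0 * (Bᵀ * A⁻¹ * αᵀ) := by
      calc Δ * (α * A⁻¹ * αᵀ) = (Δ * α) * (A⁻¹ * αᵀ) := by
            simp only [Matrix.mul_assoc]
        _ = (α * A + α0 * Bᵀ) * (A⁻¹ * αᵀ) := by rw [hΔα]
        _ = α * (A * (A⁻¹ * αᵀ)) + α0 * (Bᵀ * (A⁻¹ * αᵀ)) := by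
            simp only [Matrix.add_mul, Matrix.mul_assoc]
        _ = α * αᵀ + α0 * (Bᵀ * A⁻¹ * αᵀ) := by
            rw [← Matrix.mul_assoc A, hAA, Matrix.one_mul, Matrix.mul_assoc]
    have h2 : Δ * (W * S⁻¹ * Wᵀ) = α0 * Wᵀ := by
      calc Δ * (W * S⁻¹ * Wᵀ) = (Δ * W) * (S⁻¹ * Wᵀ) := by
            simp only [Matrix.mul_assoc]
        _ = α0 * (S * (S⁻¹ * Wᵀ)) := by rw [hΔW, Matrix.mul_assoc]
        _ = α0 * Wᵀ := by rw [← Matrix.mul_assoc S, hSS, Matrix.one_mul]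
    rw [h1, h2]
    have hWt : (Wᵀ : Matrix (Fin (p-d)) (Fin p) ℝ) = α0ᵀ - Bᵀ * A⁻¹ * αᵀ := by
      rw [hW_def, transpose_sub, transpose_mul, transpose_mul, hAinvT, Matrix.mul_assoc]
    rw [hWt, Matrix.mul_sub, ← hcompl]
    abel
  exact inv_eq_right_inv hRHS
end

section
/- Let Δ be a symmetric positive definite real p×p matrix, let α be a real p×d matrix of rank d, let F be a real n×r matrix such that FᵀF is invertible, and let M be a real n×p matrix. Define g(ξ) = tr(α ξ Fᵀ M) − (1/2) tr(α ξ FᵀF ξᵀ αᵀ Δ) and ξ̂ = (αᵀΔα)⁻¹ αᵀ Mᵀ F (FᵀF)⁻¹. Then g(ξ̂) = (1/2) tr[(αᵀΔα)⁻¹ αᵀ Mᵀ F (FᵀF)⁻¹ Fᵀ M α]. -/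
open Matrix

lemma mulVec_inj_of_rank {p d : ℕ} (α : Matrix (Fin p) (Fin d) ℝ)
    (hα : α.rank = d) : Function.Injective α.mulVec := by
  rw [← Matrix.coe_mulVecLin]
  rw [← LinearMap.ker_eq_bot]
  have hr := LinearMap.finrank_range_add_finrank_ker α.mulVecLin
  rw [Matrix.rank] at hα
  rw [hα] at hr
  simp only [Module.finrank_fin_fun] at hr
  have : Module.finrank ℝ (LinearMap.ker α.mulVecLin) = 0 := by omega
  exact Submodule.finrank_eq_zero.mp this

lemma A_posdef {p d : ℕ} (Δ : Matrix (Fin p) (Fin p) ℝ) (hΔ : Δ.PosDef)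
    (α : Matrix (Fin p) (Fin d) ℝ) (hα : α.rank = d) :
    (αᵀ * Δ * α).PosDef := by
  rw [posDef_iff_dotProduct_mulVec]
  constructor
  · have h := hΔ.isHermitian
    simp only [Matrix.IsHermitian, conjTranspose_eq_transpose_of_trivial] at h ⊢
    rw [Matrix.transpose_mul, Matrix.transpose_mul, transpose_transpose, h, Matrix.mul_assoc]
  · intro x hx
    have hax : α *ᵥ x ≠ 0 := by
      intro h
      apply hx
      exact mulVec_inj_of_rank α hα (by simpa using h)
    have hkey := hΔ.dotProduct_mulVec_pos hax
    simp only [Matrix.mulVec_mulVec, Matrix.dotProduct_mulVec, Matrix.vecMul_vecMul,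
      Matrix.vecMul_transpose, RCLike.star_def, star_trivial] at hkey ⊢
    convert hkey using 2
    rw [Matrix.mul_assoc, ← Matrix.vecMul_vecMul, Matrix.vecMul_transpose]

theorem xi_maximizer_value
    (p d n r : ℕ) (hdp : d ≤ p)
    (Δ : Matrix (Fin p) (Fin p) ℝ) (hΔ : Δ.PosDef)
    (α : Matrix (Fin p) (Fin d) ℝ) (hα : α.rank = d)
    (F : Matrix (Fin n) (Fin r) ℝ) (hF : IsUnit (Fᵀ * F))
    (M : Matrix (Fin n) (Fin p) ℝ) :
    (α * ((αᵀ * Δ * α)⁻¹ * αᵀ * Mᵀ * F * (Fᵀ * F)⁻¹) * Fᵀ * M).trace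
      - (1 / 2) * (α * ((αᵀ * Δ * α)⁻¹ * αᵀ * Mᵀ * F * (Fᵀ * F)⁻¹) * (Fᵀ * F)
          * ((αᵀ * Δ * α)⁻¹ * αᵀ * Mᵀ * F * (Fᵀ * F)⁻¹)ᵀ * αᵀ * Δ).trace
      = (1 / 2) * ((αᵀ * Δ * α)⁻¹ * αᵀ * Mᵀ * F * (Fᵀ * F)⁻¹ * Fᵀ * M * α).trace := by
  set A := αᵀ * Δ * α with hAdef
  set B := Fᵀ * F with hBdef
  have hApd := A_posdef Δ hΔ α hα
  have hAdet : IsUnit A.det := (Matrix.isUnit_iff_isUnit_det A).mp hApd.isUnit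
  have hBdet : IsUnit B.det := (Matrix.isUnit_iff_isUnit_det B).mp hF
  have hΔT : Δᵀ = Δ := by
    have := hΔ.isHermitian
    simpa [Matrix.IsHermitian, conjTranspose_eq_transpose_of_trivial] using this
  have hAT : Aᵀ = A := by
    rw [hAdef, Matrix.transpose_mul, Matrix.transpose_mul, transpose_transpose, hΔT,
      Matrix.mul_assoc]
  have hBT : Bᵀ = B := by
    rw [hBdef, Matrix.transpose_mul, transpose_transpose]
  have hAiT : (A⁻¹)ᵀ = A⁻¹ := by rw [Matrix.transpose_nonsing_inv, hAT]
  have hBiT : (B⁻¹)ᵀ = B⁻¹ := by rw [Matrix.transpose_nonsing_inv, hBT]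
  -- simplify transpose of ξ
  have hξT : (A⁻¹ * αᵀ * Mᵀ * F * B⁻¹)ᵀ = B⁻¹ * Fᵀ * M * α * A⁻¹ := by
    simp [Matrix.transpose_mul, hAiT, hBiT, Matrix.mul_assoc]
  -- term 1
  have h1 : (α * (A⁻¹ * αᵀ * Mᵀ * F * B⁻¹) * Fᵀ * M).trace
      = (A⁻¹ * αᵀ * Mᵀ * F * B⁻¹ * Fᵀ * M * α).trace := by
    rw [show α * (A⁻¹ * αᵀ * Mᵀ * F * B⁻¹) * Fᵀ * M
        = α * (A⁻¹ * αᵀ * Mᵀ * F * B⁻¹ * Fᵀ * M) by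
      simp [Matrix.mul_assoc]]
    rw [Matrix.trace_mul_comm]
  -- term 2
  have h2 : (α * (A⁻¹ * αᵀ * Mᵀ * F * B⁻¹) * B * (A⁻¹ * αᵀ * Mᵀ * F * B⁻¹)ᵀ * αᵀ * Δ).trace
      = (A⁻¹ * αᵀ * Mᵀ * F * B⁻¹ * Fᵀ * M * α).trace := by
    rw [hξT]
    have e1 : α * (A⁻¹ * αᵀ * Mᵀ * F * B⁻¹) * B * (B⁻¹ * Fᵀ * M * α * A⁻¹) * αᵀ * Δ
        = α * (A⁻¹ * αᵀ * Mᵀ * F * B⁻¹ * Fᵀ * M * α * A⁻¹ * αᵀ * Δ) := by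
      rw [show α * (A⁻¹ * αᵀ * Mᵀ * F * B⁻¹) * B = α * (A⁻¹ * αᵀ * Mᵀ * F) by
        simp [Matrix.mul_assoc, Matrix.nonsing_inv_mul B hBdet]]
      simp [Matrix.mul_assoc]
    rw [e1, Matrix.trace_mul_comm]
    congr 1
    calc A⁻¹ * αᵀ * Mᵀ * F * B⁻¹ * Fᵀ * M * α * A⁻¹ * αᵀ * Δ * α
        = A⁻¹ * αᵀ * Mᵀ * F * B⁻¹ * Fᵀ * M * α * A⁻¹ * A := by
          rw [hAdef]; simp [Matrix.mul_assoc]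
      _ = A⁻¹ * αᵀ * Mᵀ * F * B⁻¹ * Fᵀ * M * α := by
          rw [Matrix.nonsing_inv_mul_cancel_right _ _ hAdet]
  rw [h1, h2]
  ring
end

section
/- Let S be a symmetric positive definite real p×p matrix and let S_fit be a symmetric positive semidefinite real p×p matrix such that S_res = S − S_fit is positive definite. Let λ₁ ≥ λ₂ ≥ … ≥ λ_p be the eigenvalues of the symmetric matrix S^{-1/2} S_fit S^{-1/2} (so 0 ≤ λᵢ < 1 for all i). Then for every real p×d matrix α of rank d, det(αᵀ S α) / det(αᵀ S_res α) ≤ ∏_{i=1}^{d} (1 − λᵢ)⁻¹, and equality holds when the columns of α are S^{-1/2} v₁, …, S^{-1/2} v_d, where v₁, …, v_d are orthonormal eigenvectors of S^{-1/2} S_fit S^{-1/2} corresponding to λ₁, …, λ_d. -/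
open Matrix Finset

section

open scoped ComplexOrder

/-- The positive semidefinite square root of a positive semidefinite matrix
(the Mathlib definition of December 2024, removed from Mathlib since). -/
noncomputable def Matrix.PosSemidef.sqrt {n : Type*} [Fintype n] [DecidableEq n] {𝕜 : Type*}
    [RCLike 𝕜] {A : Matrix n n 𝕜} (hA : A.PosSemidef) : Matrix n n 𝕜 :=
  hA.1.eigenvectorUnitary.1 * diagonal (((↑) : ℝ → 𝕜) ∘ (hA.1.eigenvalues · |>.sqrt))
  * (star hA.1.eigenvectorUnitary : Matrix n n 𝕜)

end

namespace DetRatioAux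

lemma sqrt_mul_self' {p : ℕ} {A : Matrix (Fin p) (Fin p) ℝ} (hA : A.PosSemidef) :
    hA.sqrt * hA.sqrt = A := by
  have hU : (star hA.1.eigenvectorUnitary : Matrix (Fin p) (Fin p) ℝ) * hA.1.eigenvectorUnitary.1 = 1 :=
    Unitary.coe_star_mul_self _
  conv_rhs => rw [hA.1.spectral_theorem, Unitary.conjStarAlgAut_apply]
  unfold Matrix.PosSemidef.sqrt
  have hD : diagonal ((RCLike.ofReal : ℝ → ℝ) ∘ (hA.1.eigenvalues · |>.sqrt)) *
      diagonal ((RCLike.ofReal : ℝ → ℝ) ∘ (hA.1.eigenvalues · |>.sqrt))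
      = diagonal (RCLike.ofReal ∘ hA.1.eigenvalues) := by
    rw [diagonal_mul_diagonal]
    congr 1
    funext i
    simp [Real.mul_self_sqrt (hA.eigenvalues_nonneg i)]
  calc _ = hA.1.eigenvectorUnitary.1 * diagonal ((RCLike.ofReal : ℝ → ℝ) ∘ (hA.1.eigenvalues · |>.sqrt))
      * ((star hA.1.eigenvectorUnitary : Matrix (Fin p) (Fin p) ℝ) * hA.1.eigenvectorUnitary.1)
      * diagonal ((RCLike.ofReal : ℝ → ℝ) ∘ (hA.1.eigenvalues · |>.sqrt))
      * (star hA.1.eigenvectorUnitary : Matrix (Fin p) (Fin p) ℝ) := by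
        simp only [Matrix.mul_assoc]
    _ = _ := by rw [hU, Matrix.mul_one, Matrix.mul_assoc _ (diagonal _) (diagonal _), hD]

lemma sqrt_conjTranspose' {p : ℕ} {A : Matrix (Fin p) (Fin p) ℝ} (hA : A.PosSemidef) :
    hA.sqrtᴴ = hA.sqrt := by
  unfold Matrix.PosSemidef.sqrt
  rw [conjTranspose_mul, conjTranspose_mul, diagonal_conjTranspose]
  simp [Matrix.mul_assoc, Matrix.star_eq_conjTranspose]

variable {p d : ℕ}

lemma expand_det (A : Matrix (Fin p) (Fin d) ℝ) (μ : Fin p → ℝ) :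
    (Aᵀ * diagonal μ * A).det
      = ∑ f : Fin d → Fin p,
          ((∏ i, μ (f i)) * (∏ i, A (f i) i)) * (A.submatrix f id).det := by
  have hrow : Aᵀ * diagonal μ * A
      = Matrix.of (fun i => ∑ k, (μ k * A k i) • (A k)) := by
    ext i j
    simp [Matrix.mul_apply, diagonal, mul_comm, mul_assoc, mul_left_comm,
      Finset.sum_apply]
  rw [hrow]
  have h1 : (Matrix.of (fun i => ∑ k, (μ k * A k i) • (A k))).det
      = (detRowAlternating : (Fin d → ℝ) [⋀^Fin d]→ₗ[ℝ] ℝ).toMultilinearMap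
          (fun i => ∑ k, (μ k * A k i) • (A k)) := rfl
  rw [h1, MultilinearMap.map_sum]
  refine Finset.sum_congr rfl fun f _ => ?_
  have h2 : (detRowAlternating : (Fin d → ℝ) [⋀^Fin d]→ₗ[ℝ] ℝ).toMultilinearMap
      (fun i => (μ (f i) * A (f i) i) • (A (f i)))
      = (∏ i, (μ (f i) * A (f i) i)) •
        (detRowAlternating : (Fin d → ℝ) [⋀^Fin d]→ₗ[ℝ] ℝ).toMultilinearMap
          (fun i => A (f i)) :=
    MultilinearMap.map_smul_univ _ _ _
  rw [h2]
  have h3 : (detRowAlternating : (Fin d → ℝ) [⋀^Fin d]→ₗ[ℝ] ℝ).toMultilinearMap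
      (fun i => A (f i)) = (A.submatrix f id).det := rfl
  rw [h3, smul_eq_mul, Finset.prod_mul_distrib]

lemma fiber_sum (A : Matrix (Fin p) (Fin d) ℝ) (s : Finset (Fin p)) (hs : s.card = d) :
    ∑ f ∈ univ.filter (fun f : Fin d → Fin p => image f univ = s),
      (∏ i, A (f i) i) * (A.submatrix f id).det
    = (A.submatrix (s.orderEmbOfFin hs) id).det ^ 2 := by
  set e := s.orderEmbOfFin hs with he
  set B := A.submatrix (⇑e) id with hB
  have himg : image (⇑e) univ = s := by
    ext k
    simp only [mem_image, mem_univ, true_and]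
    rw [show (∃ i, e i = k) ↔ k ∈ Set.range ⇑e from Iff.symm Set.mem_range]
    rw [Finset.range_orderEmbOfFin]
    simp
  rw [← Finset.sum_bij
    (i := fun (σ : Equiv.Perm (Fin d)) (_ : σ ∈ (univ : Finset (Equiv.Perm (Fin d)))) => ⇑e ∘ ⇑σ)
    (hi := ?_) (i_inj := ?_) (i_surj := ?_) (h := ?_)]
  · -- ∑ σ, value = det B ^ 2
    have hval : ∀ σ : Equiv.Perm (Fin d),
        (∏ i, A ((⇑e ∘ ⇑σ) i) i) * (A.submatrix (⇑e ∘ ⇑σ) id).det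
        = (Equiv.Perm.sign σ : ℤ) * ((∏ i, B (σ i) i) * B.det) := by
      intro σ
      have h1 : A.submatrix (⇑e ∘ ⇑σ) id = B.submatrix (⇑σ) id := by
        rw [hB, Matrix.submatrix_submatrix]
        rfl
      have h2 := Matrix.det_permute σ B
      have hprod : (∏ x, A ((⇑e ∘ ⇑σ) x) x) = ∏ i, B (σ i) i := rfl
      rw [h1, h2, hprod]
      ring
    rw [Finset.sum_congr rfl (fun σ _ => hval σ)]
    have : ∑ σ : Equiv.Perm (Fin d),
        ((Equiv.Perm.sign σ : ℤ) : ℝ) * ((∏ i, B (σ i) i) * B.det)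
        = (∑ σ : Equiv.Perm (Fin d), ((Equiv.Perm.sign σ : ℤ) : ℝ) * ∏ i, B (σ i) i) * B.det := by
      rw [Finset.sum_mul]; refine Finset.sum_congr rfl fun σ _ => by ring
    rw [this, ← Matrix.det_apply', sq]
  · intro σ _
    simp only [mem_filter, mem_univ, true_and]
    rw [show image (⇑e ∘ ⇑σ) univ = image ⇑e (image ⇑σ univ) from (Finset.image_image).symm]
    rw [Finset.image_univ_equiv]
    exact himg
  · intro σ _ τ _ hst
    exact Equiv.coe_fn_injective (funext fun i => e.injective (congrFun hst i))
  · intro f hf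
    simp only [mem_filter, mem_univ, true_and] at hf
    have hinj : Function.Injective f := by
      have hcard : (image f univ).card = (univ : Finset (Fin d)).card := by
        rw [hf, hs, Finset.card_univ, Fintype.card_fin]
      have := Finset.card_image_iff.mp hcard
      rw [Finset.coe_univ] at this
      exact Set.injOn_univ.mp this
    have hmem : ∀ i, f i ∈ s := fun i => by
      rw [← hf]; exact Finset.mem_image_of_mem f (mem_univ i)
    set g : Fin d → Fin d := fun i => (s.orderIsoOfFin hs).symm ⟨f i, hmem i⟩ with hg
    have hginj : Function.Injective g := by
      intro a b hab
      have h1 := congrArg (fun z => ((s.orderIsoOfFin hs) z : Fin p)) hab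
      simp only [hg, OrderIso.apply_symm_apply] at h1
      exact hinj h1
    have hgbij : Function.Bijective g := (Finite.injective_iff_bijective).mp hginj
    refine ⟨Equiv.ofBijective g hgbij, mem_univ _, ?_⟩
    funext i
    show e (g i) = f i
    have : (s.orderIsoOfFin hs) (g i) = ⟨f i, hmem i⟩ := by
      rw [hg]; exact (s.orderIsoOfFin hs).apply_symm_apply _
    have h2 := congrArg Subtype.val this
    rwa [Finset.coe_orderIsoOfFin_apply] at h2
  · intro σ _
    rfl

lemma det_le_det_diag (A : Matrix (Fin p) (Fin d) ℝ) (μ : Fin p → ℝ) (c : ℝ) (hc : 0 ≤ c)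
    (hb : ∀ s : Finset (Fin p), s.card = d → c ≤ ∏ k ∈ s, μ k) :
    c * (Aᵀ * A).det ≤ (Aᵀ * diagonal μ * A).det := by
  have e0 : (Aᵀ * A).det
      = ∑ f : Fin d → Fin p, (∏ i, A (f i) i) * (A.submatrix f id).det := by
    have h := expand_det A (fun _ => 1)
    simpa using h
  rw [e0, expand_det, Finset.mul_sum]
  rw [← Finset.sum_fiberwise univ (fun f : Fin d → Fin p => image f univ)
    (fun f => c * ((∏ i, A (f i) i) * (A.submatrix f id).det))]
  rw [← Finset.sum_fiberwise univ (fun f : Fin d → Fin p => image f univ)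
    (fun f => ((∏ i, μ (f i)) * (∏ i, A (f i) i)) * (A.submatrix f id).det)]
  refine Finset.sum_le_sum fun s _ => ?_
  by_cases hs : s.card = d
  · -- constant weight on the fiber
    have hw : ∀ f ∈ univ.filter (fun f : Fin d → Fin p => image f univ = s),
        ((∏ i, μ (f i)) * (∏ i, A (f i) i)) * (A.submatrix f id).det
          = (∏ k ∈ s, μ k) * ((∏ i, A (f i) i) * (A.submatrix f id).det) := by
      intro f hf
      simp only [mem_filter, mem_univ, true_and] at hf
      have hinj : Function.Injective f := by
        have hcard : (image f univ).card = (univ : Finset (Fin d)).card := by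
          rw [hf, hs, Finset.card_univ, Fintype.card_fin]
        have := Finset.card_image_iff.mp hcard
        rw [Finset.coe_univ] at this
        exact Set.injOn_univ.mp this
      have : ∏ k ∈ s, μ k = ∏ i, μ (f i) := by
        rw [← hf, Finset.prod_image (fun a _ b _ hab => hinj hab)]
      rw [← this, mul_assoc]
    rw [Finset.sum_congr rfl hw, ← Finset.mul_sum, ← Finset.mul_sum, fiber_sum A s hs]
    exact mul_le_mul_of_nonneg_right (hb s hs) (sq_nonneg _)
  · -- all terms vanish
    have hz : ∀ f ∈ univ.filter (fun f : Fin d → Fin p => image f univ = s),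
        (A.submatrix f id).det = 0 := by
      intro f hf
      simp only [mem_filter, mem_univ, true_and] at hf
      have hninj : ¬ Function.Injective f := by
        intro hinj
        apply hs
        rw [← hf, Finset.card_image_of_injective _ hinj, Finset.card_univ, Fintype.card_fin]
      obtain ⟨a, b, hab, hne⟩ := Function.not_injective_iff.mp hninj
      refine Matrix.det_zero_of_row_eq hne ?_
      funext k
      simp [Matrix.submatrix_apply, hab]
    calc ∑ f ∈ univ.filter (fun f : Fin d → Fin p => image f univ = s),
          c * ((∏ i, A (f i) i) * (A.submatrix f id).det)
        = 0 := by
          refine Finset.sum_eq_zero fun f hf => ?_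
          rw [hz f hf]; ring
      _ ≤ _ := by
          refine le_of_eq ?_
          refine (Finset.sum_eq_zero fun f hf => ?_).symm
          rw [hz f hf]; ring

lemma strictMono_le {φ : Fin d → Fin p} (h : StrictMono φ) (i : Fin d) :
    (i : ℕ) ≤ (φ i : ℕ) := by
  have key : ∀ n : ℕ, ∀ i : Fin d, (i : ℕ) = n → n ≤ (φ i : ℕ) := by
    intro n
    induction n with
    | zero => intro i _; exact Nat.zero_le _
    | succ k ih =>
      intro i hi
      have hk : k < d := by have := i.isLt; omega
      have h1 : (⟨k, hk⟩ : Fin d) < i := by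
        rw [Fin.lt_def]; simp [hi]
      have h2 := Fin.lt_def.mp (h h1)
      have h3 := ih ⟨k, hk⟩ rfl
      simp at h2 h3
      omega
  exact key _ i rfl

lemma prod_bound {μ : Fin p → ℝ} (hmono : Monotone μ) (hpos : ∀ i, 0 ≤ μ i) (hdp : d ≤ p)
    (s : Finset (Fin p)) (hs : s.card = d) :
    (∏ i : Fin d, μ (Fin.castLE hdp i)) ≤ ∏ k ∈ s, μ k := by
  have himg : image (⇑(s.orderEmbOfFin hs)) univ = s := by
    ext k
    simp only [mem_image, mem_univ, true_and]
    rw [show (∃ i, s.orderEmbOfFin hs i = k) ↔ k ∈ Set.range ⇑(s.orderEmbOfFin hs)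
      from Iff.symm Set.mem_range]
    rw [Finset.range_orderEmbOfFin]
    simp
  rw [← himg, Finset.prod_image (fun a _ b _ hab => (s.orderEmbOfFin hs).injective hab)]
  refine Finset.prod_le_prod (fun i _ => hpos _) fun i _ => ?_
  refine hmono ?_
  rw [Fin.le_def]
  simpa using strictMono_le (s.orderEmbOfFin hs).strictMono i

lemma rank_inj {A : Matrix (Fin p) (Fin d) ℝ} (h : A.rank = d) :
    ∀ x : Fin d → ℝ, A *ᵥ x = 0 → x = 0 := by
  intro x hx
  have h1 := LinearMap.finrank_range_add_finrank_ker A.mulVecLin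
  rw [Matrix.rank] at h
  have h2 : Module.finrank ℝ (Fin d → ℝ) = d := by simp
  have h3 : Module.finrank ℝ (LinearMap.ker A.mulVecLin) = 0 := by omega
  have hker : LinearMap.ker A.mulVecLin = ⊥ := Submodule.finrank_eq_zero.mp h3
  have hmem : x ∈ LinearMap.ker A.mulVecLin := by
    rw [LinearMap.mem_ker, Matrix.mulVecLin_apply]
    exact hx
  rw [hker, Submodule.mem_bot] at hmem
  exact hmem

lemma posdef_conj {n m : Type*} [Fintype n] [Fintype m] [DecidableEq m]
    {A : Matrix n n ℝ} (B : Matrix n m ℝ) (hA : A.PosDef)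
    (hinj : ∀ x, B *ᵥ x = 0 → x = 0) : (Bᵀ * A * B).PosDef := by
  refine Matrix.PosDef.of_dotProduct_mulVec_pos ?_ ?_
  · have := Matrix.isHermitian_conjTranspose_mul_mul B hA.1
    have hBt : Bᴴ = Bᵀ := by ext i j; simp [conjTranspose_apply]
    rwa [hBt] at this
  · intro x hx
    have hBx : B *ᵥ x ≠ 0 := fun h0 => hx (hinj x h0)
    have := hA.dotProduct_mulVec_pos hBx
    have heq : star x ⬝ᵥ (Bᵀ * A * B) *ᵥ x = star (B *ᵥ x) ⬝ᵥ A *ᵥ (B *ᵥ x) := by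
      have hsx : star x = x := by funext k; simp
      have hsBx : star (B *ᵥ x) = B *ᵥ x := by funext k; simp
      rw [hsx, hsBx]
      rw [show (Bᵀ * A * B) *ᵥ x = Bᵀ *ᵥ (A *ᵥ (B *ᵥ x)) by
        rw [← Matrix.mulVec_mulVec, ← Matrix.mulVec_mulVec]]
      rw [Matrix.dotProduct_mulVec, Matrix.vecMul_transpose]
    rw [heq]
    exact this

end DetRatioAux

open DetRatioAux

/-- Maximization of det(αᵀSα)/det(αᵀS_res α) over full-rank p×d matrices α, where
S_res = S − S_fit.  The maximum is ∏_{i<d} (1 − λᵢ)⁻¹, with λ₁ ≥ … ≥ λ_p the eigenvalues of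
S^{-1/2} S_fit S^{-1/2}, and it is attained at the matrix whose columns are S^{-1/2}v₁, …,
S^{-1/2}v_d with v₁, …, v_d corresponding orthonormal eigenvectors. -/
theorem det_ratio_maximization
    (p d : ℕ) (hd : 0 < d) (hdp : d ≤ p)
    (S Sfit : Matrix (Fin p) (Fin p) ℝ)
    (hS : S.PosDef) (hSfit : Sfit.PosSemidef) (hSres : (S - Sfit).PosDef)
    (lam : Fin p → ℝ) (hlam : Antitone lam)
    (V : Matrix (Fin p) (Fin p) ℝ) (hV : Vᵀ * V = 1)
    (hEig : hS.posSemidef.sqrt⁻¹ * Sfit * hS.posSemidef.sqrt⁻¹ * V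
        = V * Matrix.diagonal lam) :
    (∀ i, 0 ≤ lam i ∧ lam i < 1) ∧
    (∀ α : Matrix (Fin p) (Fin d) ℝ, α.rank = d →
      (αᵀ * S * α).det / (αᵀ * (S - Sfit) * α).det
        ≤ ∏ i : Fin d, (1 - lam (Fin.castLE hdp i))⁻¹) ∧
    ((hS.posSemidef.sqrt⁻¹ * V.submatrix id (Fin.castLE hdp))ᵀ * S
          * (hS.posSemidef.sqrt⁻¹ * V.submatrix id (Fin.castLE hdp))).det
        / ((hS.posSemidef.sqrt⁻¹ * V.submatrix id (Fin.castLE hdp))ᵀ * (S - Sfit)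
          * (hS.posSemidef.sqrt⁻¹ * V.submatrix id (Fin.castLE hdp))).det
      = ∏ i : Fin d, (1 - lam (Fin.castLE hdp i))⁻¹ := by
  classical
  set N := hS.posSemidef.sqrt with hNdef
  set W := N⁻¹ with hWdef
  have hNN : N * N = S := DetRatioAux.sqrt_mul_self' hS.posSemidef
  have hNherm : Nᵀ = N := by
    have h : Nᴴ = N := DetRatioAux.sqrt_conjTranspose' hS.posSemidef
    calc Nᵀ = Nᴴ := by ext i j; simp [conjTranspose_apply]
      _ = N := h
  have hdetN : N.det ≠ 0 := by
    intro h0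
    have h1 : N.det * N.det = S.det := by rw [← Matrix.det_mul, hNN]
    rw [h0] at h1
    have := hS.det_pos
    simp at h1
    linarith [h1, this]
  have hWN : W * N = 1 := Matrix.nonsing_inv_mul N (Ne.isUnit hdetN)
  have hNW : N * W = 1 := Matrix.mul_nonsing_inv N (Ne.isUnit hdetN)
  have hWt : Wᵀ = W := by rw [hWdef, Matrix.transpose_nonsing_inv, hNherm]
  have hWSW : W * S * W = 1 := by
    rw [← hNN, show W * (N * N) * W = (W * N) * (N * W) from by simp only [Matrix.mul_assoc],
      hWN, hNW, Matrix.one_mul]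
  have hWinj : ∀ x : Fin p → ℝ, W *ᵥ x = 0 → x = 0 := by
    intro x hx
    calc x = (N * W) *ᵥ x := by rw [hNW, Matrix.one_mulVec]
      _ = N *ᵥ (W *ᵥ x) := by rw [← Matrix.mulVec_mulVec]
      _ = 0 := by rw [hx, Matrix.mulVec_zero]
  set T := W * Sfit * W with hTdef
  have hVVt : V * Vᵀ = 1 := mul_eq_one_comm.mp hV
  have hTpsd : T.PosSemidef := by
    have h := hSfit.conjTranspose_mul_mul_same W
    have hWc : Wᴴ = W := by rw [show Wᴴ = Wᵀ from by ext i j; simp [conjTranspose_apply], hWt]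
    rwa [hWc] at h
  have hMT : W * (S - Sfit) * W = 1 - T := by
    rw [Matrix.mul_sub, Matrix.sub_mul, hWSW]
  have hMpos : (1 - T).PosDef := by
    rw [← hMT]
    have h := posdef_conj W hSres hWinj
    rwa [hWt] at h
  -- Part 1
  have hlam01 : ∀ i, 0 ≤ lam i ∧ lam i < 1 := by
    intro i
    set v : Fin p → ℝ := fun k => V k i with hv
    have hvv : v ⬝ᵥ v = 1 := by
      have h := congrFun (congrFun hV i) i
      simpa [Matrix.mul_apply, Matrix.one_apply, dotProduct, mul_comm] using h
    have hv0 : v ≠ 0 := by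
      intro h0; rw [h0] at hvv; simp at hvv
    have hcol : T *ᵥ v = lam i • v := by
      funext k
      have h := congrFun (congrFun hEig k) i
      simpa [Matrix.mul_apply, Matrix.mulVec, dotProduct, Matrix.diagonal_apply,
        mul_comm] using h
    have hstar : star v = v := funext fun k => by simp
    have hd1 : v ⬝ᵥ (T *ᵥ v) = lam i := by
      rw [hcol, dotProduct_smul, hvv, smul_eq_mul, mul_one]
    have h0le : 0 ≤ lam i := by
      have h := hTpsd.dotProduct_mulVec_nonneg v
      rw [hstar, hd1] at h
      exact h
    have hlt : lam i < 1 := by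
      have h2 := hMpos.dotProduct_mulVec_pos hv0
      rw [hstar] at h2
      have h3 : (1 - T) *ᵥ v = v - lam i • v := by
        rw [Matrix.sub_mulVec, Matrix.one_mulVec, hcol]
      rw [h3] at h2
      have h4 : v ⬝ᵥ (v - lam i • v) = 1 - lam i := by
        rw [dotProduct_sub, dotProduct_smul, hvv, smul_eq_mul, mul_one]
      rw [h4] at h2
      linarith
    exact ⟨h0le, hlt⟩
  have hμpos : ∀ i, 0 < 1 - lam i := fun i => by have := (hlam01 i).2; linarith
  have hμmono : Monotone (fun i => 1 - lam i) := fun a b hab => by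
    simp only
    have := hlam hab
    linarith
  have h1T : (1 : Matrix (Fin p) (Fin p) ℝ) - T
      = V * diagonal (fun i => 1 - lam i) * Vᵀ := by
    have h2 : ((1 : Matrix (Fin p) (Fin p) ℝ) - T) * V = V * diagonal (fun i => 1 - lam i) := by
      rw [Matrix.sub_mul, Matrix.one_mul, hEig]
      rw [show V - V * diagonal lam = V * (1 - diagonal lam) from by
        rw [Matrix.mul_sub, Matrix.mul_one]]
      congr 1
      rw [← Matrix.diagonal_one, Matrix.diagonal_sub]
    calc (1 : Matrix (Fin p) (Fin p) ℝ) - T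
        = (((1 : Matrix (Fin p) (Fin p) ℝ) - T) * V) * Vᵀ := by
          rw [Matrix.mul_assoc, hVVt, Matrix.mul_one]
      _ = V * diagonal (fun i => 1 - lam i) * Vᵀ := by rw [h2]
  have hc : 0 < ∏ i : Fin d, (1 - lam (Fin.castLE hdp i)) :=
    Finset.prod_pos (fun i _ => hμpos _)
  refine ⟨hlam01, ?_, ?_⟩
  · -- Part 2
    intro α hrank
    have hαinj := rank_inj hrank
    set β := Vᵀ * (N * α) with hβ
    have e1 : αᵀ * S * α = βᵀ * β := by
      have h1 : βᵀ * β = αᵀ * (Nᵀ * (V * (Vᵀ * (N * α)))) := by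
        rw [hβ, Matrix.transpose_mul, Matrix.transpose_mul, Matrix.transpose_transpose]
        simp only [Matrix.mul_assoc]
      rw [h1, ← Matrix.mul_assoc V Vᵀ, hVVt, Matrix.one_mul, hNherm, ← hNN]
      simp only [Matrix.mul_assoc]
    have hdiag : S - Sfit = N * (V * diagonal (fun i => 1 - lam i) * Vᵀ) * N := by
      have h3 : N * (W * (S - Sfit) * W) * N = S - Sfit := by
        calc N * (W * (S - Sfit) * W) * N = (N * W) * ((S - Sfit) * (W * N)) := by
              simp only [Matrix.mul_assoc]
          _ = S - Sfit := by rw [hNW, hWN, Matrix.one_mul, Matrix.mul_one]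
      rw [← h3, hMT, h1T]
    have e2 : αᵀ * (S - Sfit) * α = βᵀ * diagonal (fun i => 1 - lam i) * β := by
      rw [hdiag, hβ, Matrix.transpose_mul, Matrix.transpose_mul,
        Matrix.transpose_transpose, hNherm]
      simp only [Matrix.mul_assoc]
    have hres : (αᵀ * (S - Sfit) * α).PosDef := posdef_conj α hSres hαinj
    have hden := hres.det_pos
    have hkey := det_le_det_diag β (fun i => 1 - lam i)
      (∏ i : Fin d, (1 - lam (Fin.castLE hdp i))) hc.le
      (fun s hs => prod_bound hμmono (fun i => (hμpos i).le) hdp s hs)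
    rw [Finset.prod_inv_distrib, div_le_iff₀ hden]
    rw [e1, e2] at *
    have hcc : (∏ i : Fin d, (1 - lam (Fin.castLE hdp i)))
        * (∏ i : Fin d, (1 - lam (Fin.castLE hdp i)))⁻¹ = 1 := mul_inv_cancel₀ (ne_of_gt hc)
    nlinarith [hkey, hc, hden, hcc]
  · -- Part 3
    set E := V.submatrix id (Fin.castLE hdp) with hE
    have hcinj : Function.Injective (Fin.castLE hdp) := Fin.castLE_injective hdp
    have hEtE : ∀ (X : Matrix (Fin p) (Fin p) ℝ),
        Eᵀ * X * E = (Vᵀ * X * V).submatrix (Fin.castLE hdp) (Fin.castLE hdp) := by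
      intro X
      ext i j
      simp [Matrix.mul_apply, hE, Finset.sum_mul]
    have hnum : (W * E)ᵀ * S * (W * E) = 1 := by
      have h0 : (W * E)ᵀ * S * (W * E) = Eᵀ * (W * S * W) * E := by
        rw [Matrix.transpose_mul, hWt]
        simp only [Matrix.mul_assoc]
      rw [h0, hWSW, hEtE 1, Matrix.mul_one, hV, Matrix.submatrix_one _ hcinj]
    have hdenom : (W * E)ᵀ * (S - Sfit) * (W * E)
        = diagonal (fun i : Fin d => 1 - lam (Fin.castLE hdp i)) := by
      have h0 : (W * E)ᵀ * (S - Sfit) * (W * E) = Eᵀ * (W * (S - Sfit) * W) * E := by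
        rw [Matrix.transpose_mul, hWt]
        simp only [Matrix.mul_assoc]
      rw [h0, hMT, h1T, hEtE]
      have h1 : Vᵀ * (V * diagonal (fun i => 1 - lam i) * Vᵀ) * V
          = diagonal (fun i => 1 - lam i) := by
        calc Vᵀ * (V * diagonal (fun i => 1 - lam i) * Vᵀ) * V
            = (Vᵀ * V) * (diagonal (fun i => 1 - lam i) * (Vᵀ * V)) := by
              simp only [Matrix.mul_assoc]
          _ = diagonal (fun i => 1 - lam i) := by rw [hV, Matrix.mul_one, Matrix.one_mul]
      rw [h1, Matrix.submatrix_diagonal _ _ hcinj]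
      rfl
    rw [hnum, hdenom, Matrix.det_one, Matrix.det_diagonal]
    rw [one_div, ← Finset.prod_inv_distrib]
end
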